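/- Let N ≥ 2, 1 ≤ z ≤ N - 1 be integers, 1 < k < N real, λ = (N-k)/(N-1), p₀ = 1/N. Define λ_B = λ^z · ∏_{a=1}^{z} (1 - (a-1)·p₀) / ∏_{a=1}^{z} (1 - (a-1)·λ·p₀). Then 0 < λ_B < 1. -/
import Mathlib


theorem lambdaB_in_unit_interval (N z : ℕ) (hN : 2 ≤ N) (hz1 : 1 ≤ z) (hzN : z ≤ N - 1)
    (k : ℝ) (hk1 : 1 < k) (hkN : k < N)
    (lam p₀ lamB : ℝ) (hlam : lam = ((N : ℝ) - k) / ((N : ℝ) - 1)) (hp₀ : p₀ = 1 / N)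
    (hlamB : lamB = lam ^ z *
      (∏ a ∈ Finset.Icc 1 z, (1 - ((a : ℝ) - 1) * p₀)) /
      (∏ a ∈ Finset.Icc 1 z, (1 - ((a : ℝ) - 1) * lam * p₀))) :
    0 < lamB ∧ lamB < 1 := by
  have hN2 : (2 : ℝ) ≤ N := by exact_mod_cast hN
  have hN0 : (0 : ℝ) < N := by linarith
  have hzN' : (z : ℝ) + 1 ≤ N := by exact_mod_cast (by omega : z + 1 ≤ N)
  have hp0 : 0 < p₀ := by rw [hp₀]; positivity
  have hlam0 : 0 < lam := by rw [hlam]; apply div_pos <;> linarith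
  have hlam1 : lam < 1 := by
    rw [hlam, div_lt_one (by linarith)]; linarith
  have hterm : ∀ a ∈ Finset.Icc 1 z, 0 < 1 - ((a : ℝ) - 1) * p₀ := by
    intro a ha
    simp only [Finset.mem_Icc] at ha
    have ha2 : (a : ℝ) ≤ z := by exact_mod_cast ha.2
    have : ((a : ℝ) - 1) * p₀ < 1 := by
      rw [hp₀, mul_one_div, div_lt_one hN0]; linarith
    linarith
  have hterm2 : ∀ a ∈ Finset.Icc 1 z, 0 < 1 - ((a : ℝ) - 1) * lam * p₀ := by
    intro a ha
    have h1 := hterm a ha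
    simp only [Finset.mem_Icc] at ha
    have ha1 : (1 : ℝ) ≤ a := by exact_mod_cast ha.1
    nlinarith
  set P := ∏ a ∈ Finset.Icc 1 z, (1 - ((a : ℝ) - 1) * p₀) with hP_def
  set Q := ∏ a ∈ Finset.Icc 1 z, (1 - ((a : ℝ) - 1) * lam * p₀) with hQ_def
  have hP : 0 < P := Finset.prod_pos hterm
  have hQ : 0 < Q := Finset.prod_pos hterm2
  have hPQ : P ≤ Q := by
    apply Finset.prod_le_prod (fun a ha => (hterm a ha).le)
    intro a ha
    simp only [Finset.mem_Icc] at ha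
    have ha1 : (1 : ℝ) ≤ a := by exact_mod_cast ha.1
    nlinarith [mul_nonneg (mul_nonneg (by linarith : (0:ℝ) ≤ (a:ℝ)-1) hp0.le) (by linarith : (0:ℝ) ≤ 1-lam)]
  have hlz : lam ^ z < 1 := pow_lt_one₀ hlam0.le hlam1 (by omega)
  have hlzp : 0 < lam ^ z := pow_pos hlam0 z
  constructor
  · rw [hlamB]; positivity
  · rw [hlamB, div_lt_one hQ]
    nlinarith [mul_le_mul_of_nonneg_left hPQ hlzp.le,
      mul_lt_mul_of_pos_right hlz hQ]
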